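/- Let M ≥ 2, N_v ≥ 2, T ≥ 1, F ∈ ℂ^{M×T}, and u ∈ ℝ. Define G = (π²(N_v−1)(2N_v−1)/6) · φ_M(u)^H F F^H φ_M(u) − π(N_v−1) · Im{ (∂φ_M(u)/∂u)^H F F^H φ_M(u) }. Let P_{u,⊥} = φ_M(u)φ_M(u)^H/‖φ_M(u)‖² + φ^⊥_M(u)(φ^⊥_M(u))^H/‖φ^⊥_M(u)‖² be the orthogonal projection onto the span of φ_M(u) and φ^⊥_M(u), and let λ_max(F^H P_{u,⊥} F) be the largest eigenvalue of the Hermitian matrix F^H P_{u,⊥} F. If φ_M(u)^H F F^H φ_M(u)/‖φ_M(u)‖² ≥ λ_max(F^H P_{u,⊥} F)/4, then G ≥ 0. -/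

import Mathlib

open Matrix

/-- Steering vector of a ULA: `(φ_M(u))_n = exp(iπnu)`. -/
noncomputable def steer (M : ℕ) (u : ℝ) : Fin M → ℂ :=
  fun n => Complex.exp (Complex.I * (Real.pi * u * n))

/-- Entrywise derivative of the steering vector: `(∂φ_M(u)/∂u)_n = iπn·exp(iπnu)`. -/
noncomputable def dsteer (M : ℕ) (u : ℝ) : Fin M → ℂ :=
  fun n => Complex.I * (Real.pi * n) * Complex.exp (Complex.I * (Real.pi * u * n))

/-- `(φ^⊥_M(u))_n = (n − (M−1)/2)·exp(iπnu)`. -/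
noncomputable def steerPerp (M : ℕ) (u : ℝ) : Fin M → ℂ :=
  fun n => (((n : ℝ) - ((M : ℝ) - 1) / 2 : ℝ) : ℂ) *
    Complex.exp (Complex.I * (Real.pi * u * n))

/- ===== auxiliary lemmas ===== -/

lemma sum_range_cast (M : ℕ) : ∑ n ∈ Finset.range M, (n : ℝ) = M * (M - 1) / 2 := by
  induction M with
  | zero => simp
  | succ m ih => rw [Finset.sum_range_succ, ih]; push_cast; ring

lemma sum_range_sq_cast (M : ℕ) :
    ∑ n ∈ Finset.range M, (n : ℝ) ^ 2 = M * (M - 1) * (2 * M - 1) / 6 := by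
  induction M with
  | zero => simp
  | succ m ih => rw [Finset.sum_range_succ, ih]; push_cast; ring

lemma sum_centered_sq (M : ℕ) :
    ∑ n ∈ Finset.range M, ((n : ℝ) - ((M : ℝ) - 1) / 2) ^ 2
      = M * ((M : ℝ) ^ 2 - 1) / 12 := by
  have h1 := sum_range_cast M
  have h2 := sum_range_sq_cast M
  have key : ∑ n ∈ Finset.range M, ((n : ℝ) - ((M : ℝ) - 1) / 2) ^ 2
      = (∑ n ∈ Finset.range M, (n : ℝ) ^ 2)
        - 2 * (((M : ℝ) - 1) / 2) * (∑ n ∈ Finset.range M, (n : ℝ))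
        + M * (((M : ℝ) - 1) / 2) ^ 2 := by
    rw [Finset.mul_sum, ← Finset.sum_sub_distrib,
      show (M : ℝ) * (((M : ℝ) - 1) / 2) ^ 2
          = ∑ _n ∈ Finset.range M, (((M : ℝ) - 1) / 2) ^ 2 by
        rw [Finset.sum_const, Finset.card_range, nsmul_eq_mul],
      ← Finset.sum_add_distrib]
    exact Finset.sum_congr rfl fun n _ => by ring
  rw [key, h1, h2]; ring

lemma quad_vecMulVec {M : ℕ} (v y : Fin M → ℂ) :
    vecMulVec v (star v) *ᵥ y = (star v ⬝ᵥ y) • v := by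
  funext i
  simp only [vecMulVec_apply, mulVec, dotProduct, Pi.smul_apply, Pi.star_apply, smul_eq_mul,
    Finset.sum_mul]
  exact Finset.sum_congr rfl fun j _ => by ring

lemma star_dot {M : ℕ} (v y : Fin M → ℂ) :
    star y ⬝ᵥ v = (starRingEnd ℂ) (star v ⬝ᵥ y) := by
  simp only [dotProduct, map_sum]
  exact Finset.sum_congr rfl fun j _ => by simp [Complex.star_def, mul_comm]

lemma dot_self_eq_normSq {M : ℕ} (v : Fin M → ℂ) :
    star v ⬝ᵥ v = ((∑ i, Complex.normSq (v i) : ℝ) : ℂ) := by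
  simp [dotProduct, Complex.normSq_eq_conj_mul_self]

lemma quad_le_sup {T : ℕ} [NeZero T] (A : Matrix (Fin T) (Fin T) ℂ) (hA : A.IsHermitian)
    (x : Fin T → ℂ) :
    (star x ⬝ᵥ (A *ᵥ x)).re ≤ (⨆ i, hA.eigenvalues i) * ∑ i, Complex.normSq (x i) := by
  classical
  set U : Matrix (Fin T) (Fin T) ℂ := (hA.eigenvectorUnitary : Matrix (Fin T) (Fin T) ℂ) with hU
  set y : Fin T → ℂ := star U *ᵥ x with hy
  have hsx : star x ᵥ* U = star y := by
    rw [hy, star_mulVec, star_eq_conjTranspose, conjTranspose_conjTranspose]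
  have h1 : star x ⬝ᵥ (A *ᵥ x)
      = star y ⬝ᵥ (diagonal (RCLike.ofReal ∘ hA.eigenvalues) *ᵥ y) := by
    conv_lhs => rw [hA.spectral_theorem, Unitary.conjStarAlgAut_apply]
    rw [← mulVec_mulVec, ← mulVec_mulVec, dotProduct_mulVec, hsx]
  have h2 : ∑ i, Complex.normSq (y i) = ∑ i, Complex.normSq (x i) := by
    have hyy : star y ⬝ᵥ y = star x ⬝ᵥ x := by
      calc star y ⬝ᵥ y = (star x ᵥ* U) ⬝ᵥ (star U *ᵥ x) := by rw [hsx, ← hy]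
        _ = star x ⬝ᵥ ((U * star U) *ᵥ x) := by rw [← dotProduct_mulVec, mulVec_mulVec]
        _ = star x ⬝ᵥ x := by
            rw [Matrix.mem_unitaryGroup_iff.mp hA.eigenvectorUnitary.2, one_mulVec]
    have := (dot_self_eq_normSq y) ▸ (dot_self_eq_normSq x) ▸ hyy
    exact_mod_cast this
  have h3 : star y ⬝ᵥ (diagonal (RCLike.ofReal ∘ hA.eigenvalues) *ᵥ y)
      = ((∑ i, hA.eigenvalues i * Complex.normSq (y i) : ℝ) : ℂ) := by
    push_cast
    simp only [dotProduct, mulVec_diagonal, Function.comp_apply]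
    refine Finset.sum_congr rfl fun j _ => ?_
    simp [Complex.star_def, Complex.normSq_eq_conj_mul_self, RCLike.ofReal_alg]
    ring
  rw [h1, h3, ← h2, Complex.ofReal_re, Finset.mul_sum]
  refine Finset.sum_le_sum fun i _ => ?_
  exact mul_le_mul_of_nonneg_right (le_ciSup (Set.Finite.bddAbove (Set.finite_range _)) i)
    (Complex.normSq_nonneg _)

lemma normSq_exp_I (w : ℝ) : Complex.normSq (Complex.exp (Complex.I * w)) = 1 := by
  rw [Complex.normSq_eq_norm_sq, Complex.norm_exp]
  simp [Complex.mul_re]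

lemma normSq_exp_I' (p q : ℝ) (n : ℕ) :
    Complex.normSq (Complex.exp (Complex.I * ((p : ℂ) * (q : ℂ) * (n : ℂ)))) = 1 := by
  rw [show ((p : ℂ) * q * n) = ((p * q * n : ℝ) : ℂ) by push_cast; ring]
  exact normSq_exp_I _

/- ===== the theorem ===== -/

lemma arith_final (m nv S lam r q : ℝ) (hm : 2 ≤ m) (hnv : 2 ≤ nv) (hS0 : 0 ≤ S)
    (hq0 : 0 ≤ q)
    (key : m⁻¹ * S ^ 2 + (m * (m ^ 2 - 1) / 12)⁻¹ * q ≤ lam * S)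
    (hcond : S / m ≥ lam / 4) (hr2 : r ^ 2 ≤ q) :
    0 ≤ (2 * nv - 1) / 6 * S + ((m - 1) / 2 * S + r) := by
  have hm0 : (0:ℝ) < m := by linarith
  have ht : (0:ℝ) < m * (m ^ 2 - 1) / 12 := by nlinarith
  have hlamS : lam * S ≤ 4 * S ^ 2 / m := by
    have h : lam ≤ 4 * (S / m) := by linarith
    calc lam * S ≤ (4 * (S / m)) * S := mul_le_mul_of_nonneg_right h hS0
      _ = 4 * S ^ 2 / m := by ring
  have h5 : (m * (m ^ 2 - 1) / 12)⁻¹ * q ≤ 3 * S ^ 2 / m := by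
    have he : m⁻¹ * S ^ 2 = S ^ 2 / m := by ring
    have he2 : 4 * S ^ 2 / m - S ^ 2 / m = 3 * S ^ 2 / m := by ring
    linarith
  have hq3 : q ≤ (m ^ 2 - 1) / 4 * S ^ 2 := by
    calc q = (m * (m ^ 2 - 1) / 12) * ((m * (m ^ 2 - 1) / 12)⁻¹ * q) := by
          rw [← mul_assoc, mul_inv_cancel₀ ht.ne', one_mul]
      _ ≤ (m * (m ^ 2 - 1) / 12) * (3 * S ^ 2 / m) := mul_le_mul_of_nonneg_left h5 ht.le
      _ = (m ^ 2 - 1) / 4 * S ^ 2 := by field_simp; ring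
  have hrS : -(m / 2 * S) ≤ r := by
    have h1 : r ^ 2 ≤ (m / 2 * S) ^ 2 := by nlinarith
    exact (abs_le_of_sq_le_sq' h1 (by positivity)).1
  nlinarith [hrS, hS0, mul_nonneg (by linarith : (0:ℝ) ≤ nv - 2) hS0]

/-- if `φ_Mᴴ F Fᴴ φ_M / ‖φ_M‖² ≥ λ_max(Fᴴ P_{u,⊥} F)/4` then the
aperture-gain term
`G = (π²(N_v−1)(2N_v−1)/6) φ_Mᴴ F Fᴴ φ_M − π(N_v−1) Im{(∂φ_M/∂u)ᴴ F Fᴴ φ_M}`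
is non-negative. -/
theorem stmt3
    (M T Nv : ℕ) (hM : 2 ≤ M) (hNv : 2 ≤ Nv) (hT : 1 ≤ T)
    (F : Matrix (Fin M) (Fin T) ℂ) (u : ℝ)
    (G : ℝ)
    (hG : G = Real.pi ^ 2 * ((Nv : ℝ) - 1) * (2 * (Nv : ℝ) - 1) / 6 *
        (star (steer M u) ⬝ᵥ ((F * Fᴴ) *ᵥ steer M u)).re
      - Real.pi * ((Nv : ℝ) - 1) *
        (star (dsteer M u) ⬝ᵥ ((F * Fᴴ) *ᵥ steer M u)).im)
    (P : Matrix (Fin M) (Fin M) ℂ)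
    (hP : P = (((∑ n, Complex.normSq (steer M u n) : ℝ) : ℂ))⁻¹ •
        vecMulVec (steer M u) (star (steer M u))
      + (((∑ n, Complex.normSq (steerPerp M u n) : ℝ) : ℂ))⁻¹ •
        vecMulVec (steerPerp M u) (star (steerPerp M u)))
    (hH : (Fᴴ * P * F).IsHermitian)
    (hcond : (star (steer M u) ⬝ᵥ ((F * Fᴴ) *ᵥ steer M u)).re /
        (∑ n, Complex.normSq (steer M u n))
      ≥ (⨆ i, hH.eigenvalues i) / 4) :
    0 ≤ G := by
  have : NeZero T := ⟨by omega⟩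
  have hMR : (2 : ℝ) ≤ (M : ℝ) := by exact_mod_cast hM
  have hNvR : (2 : ℝ) ≤ (Nv : ℝ) := by exact_mod_cast hNv
  set a : Fin M → ℂ := steer M u with ha
  set b : Fin M → ℂ := steerPerp M u with hb
  set A : Fin T → ℂ := Fᴴ *ᵥ a with hA
  set B : Fin T → ℂ := Fᴴ *ᵥ b with hB
  set S : ℝ := ∑ i, Complex.normSq (A i) with hSdef
  set z : ℂ := star B ⬝ᵥ A with hz
  set lam : ℝ := ⨆ i, hH.eigenvalues i with hlam
  set c : ℝ := ((M : ℝ) - 1) / 2 with hc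
  -- sums of normSq of the steering vectors
  have f1 : (∑ n, Complex.normSq (a n)) = (M : ℝ) := by
    simp [ha, steer, normSq_exp_I']
  have f2 : (∑ n, Complex.normSq (b n)) = (M : ℝ) * ((M : ℝ) ^ 2 - 1) / 12 := by
    have : ∀ n : Fin M, Complex.normSq (b n) = ((n : ℝ) - ((M : ℝ) - 1) / 2) ^ 2 := by
      intro n
      simp only [hb, steerPerp, Complex.normSq_mul, normSq_exp_I', mul_one,
        Complex.normSq_ofReal]
      ring
    rw [Finset.sum_congr rfl fun n _ => this n]
    rw [Fin.sum_univ_eq_sum_range (fun n => ((n : ℝ) - ((M : ℝ) - 1) / 2) ^ 2) M]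
    exact sum_centered_sq M
  have htpos : (0 : ℝ) < (M : ℝ) * ((M : ℝ) ^ 2 - 1) / 12 := by nlinarith
  -- basic dot product identities
  have hAv : star a ᵥ* F = star A := by
    rw [hA, star_mulVec, conjTranspose_conjTranspose]
  have hBv : star b ᵥ* F = star B := by
    rw [hB, star_mulVec, conjTranspose_conjTranspose]
  have hQa : (F * Fᴴ) *ᵥ a = F *ᵥ A := by rw [← mulVec_mulVec]
  have h1 : star a ⬝ᵥ ((F * Fᴴ) *ᵥ a) = ((S : ℝ) : ℂ) := by
    rw [hQa, dotProduct_mulVec, hAv, dot_self_eq_normSq]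
  have h2 : star b ⬝ᵥ ((F * Fᴴ) *ᵥ a) = z := by
    rw [hQa, dotProduct_mulVec, hBv, hz]
  have h1re : (star a ⬝ᵥ ((F * Fᴴ) *ᵥ a)).re = S := by rw [h1, Complex.ofReal_re]
  have hS0 : 0 ≤ S := Finset.sum_nonneg fun i _ => Complex.normSq_nonneg _
  -- the derivative decomposition
  have hdecomp : dsteer M u = fun n => Complex.I * (Real.pi : ℂ) * (b n + (c : ℂ) * a n) := by
    funext n
    simp only [dsteer, hb, steerPerp, ha, steer, hc]
    push_cast
    ring
  have hds : star (dsteer M u) ⬝ᵥ ((F * Fᴴ) *ᵥ a)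
      = -(Complex.I * (Real.pi : ℂ)) * (z + (c : ℂ) * ((S : ℝ) : ℂ)) := by
    have hfun : star (dsteer M u)
        = fun n => -(Complex.I * (Real.pi : ℂ)) * (star b n + (c : ℂ) * star a n) := by
      funext n
      rw [Pi.star_apply, congrFun hdecomp n]
      simp only [Pi.star_apply, Complex.star_def, _root_.map_mul, _root_.map_add,
        Complex.conj_I, Complex.conj_ofReal]
      ring
    rw [← h1, ← h2, hfun]
    simp only [dotProduct, Finset.mul_sum, mul_add, ← Finset.sum_add_distrib, Pi.star_apply]
    exact Finset.sum_congr rfl fun n _ => by ring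
  have him : (star (dsteer M u) ⬝ᵥ ((F * Fᴴ) *ᵥ a)).im = -(Real.pi * (z.re + c * S)) := by
    rw [hds]
    simp only [Complex.neg_im, Complex.neg_re, Complex.mul_im, Complex.mul_re, Complex.I_re, Complex.I_im,
      Complex.ofReal_re, Complex.ofReal_im, Complex.add_re, Complex.add_im]
    ring
  -- key spectral bound applied at x = A
  have key : (M : ℝ)⁻¹ * S ^ 2 + ((M : ℝ) * ((M : ℝ) ^ 2 - 1) / 12)⁻¹ * Complex.normSq z
      ≤ lam * S := by
    have hq := quad_le_sup (Fᴴ * P * F) hH A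
    rw [← hSdef, ← hlam] at hq
    refine le_trans (le_of_eq ?_) hq
    have e0 : (Fᴴ * P * F) *ᵥ A = Fᴴ *ᵥ (P *ᵥ (F *ᵥ A)) := by
      rw [← mulVec_mulVec, ← mulVec_mulVec]
    rw [e0, dotProduct_mulVec, show star A ᵥ* Fᴴ = star (F *ᵥ A) from (star_mulVec F A).symm,
      ← hQa, hP]
    rw [add_mulVec, smul_mulVec, smul_mulVec, quad_vecMulVec, quad_vecMulVec,
      dotProduct_add, dotProduct_smul, dotProduct_smul, dotProduct_smul, dotProduct_smul,
      h1, h2, star_dot a ((F * Fᴴ) *ᵥ a), star_dot b ((F * Fᴴ) *ᵥ a), h1, h2, f1, f2]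
    rw [smul_eq_mul, smul_eq_mul, smul_eq_mul, smul_eq_mul, Complex.mul_conj,
      Complex.mul_conj]
    simp only [Complex.normSq_ofReal, ← Complex.ofReal_natCast, ← Complex.ofReal_inv,
      ← Complex.ofReal_mul, ← Complex.ofReal_add, Complex.ofReal_re]
    ring
  -- rewrite the condition
  rw [h1re, f1] at hcond
  have hG' : G = Real.pi ^ 2 * ((Nv : ℝ) - 1) *
      ((2 * (Nv : ℝ) - 1) / 6 * S + (c * S + z.re)) := by
    rw [hG, h1re, him]; ring
  have hr2 : z.re ^ 2 ≤ Complex.normSq z := by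
    rw [Complex.normSq_apply]; nlinarith [sq_nonneg z.im]
  rw [hG', hc]
  exact mul_nonneg (mul_nonneg (sq_nonneg _) (by linarith))
    (arith_final (M : ℝ) (Nv : ℝ) S lam z.re (Complex.normSq z) hMR hNvR hS0
      (Complex.normSq_nonneg z) key hcond hr2)
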